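/- arXiv:2312.09029 — 5 statements merged into one kernel-verified Lean document; each statement's English description precedes it below -/
import Mathlib

section
/- Let X be a complex m × n matrix with all entries non-negative real numbers, and define λ ∈ ℝ^n by λ_j = ∑_s ∑_t X_{s,j} X_{s,t}. Then the positive semidefinite matrix P = X*X satisfies P ≤ Δ(λ) in the Loewner order, where Δ(λ) is the diagonal matrix with diagonal entries λ_j. -/
open Matrix
open scoped ComplexOrder

theorem stmt2 {m n : ℕ} (X : Matrix (Fin m) (Fin n) ℂ)
    (hX : ∀ i j, ∃ r : ℝ, 0 ≤ r ∧ X i j = (r : ℂ)) :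
    (Matrix.diagonal (fun j => ∑ s, ∑ t, X s j * X s t) - Xᴴ * X).PosSemidef := by
  choose R hR0 hXR using hX
  set c : Fin n → Fin n → ℝ := fun j k => ∑ s, R s j * R s k with hc
  have hc0 : ∀ j k, 0 ≤ c j k := fun j k =>
    Finset.sum_nonneg fun s _ => mul_nonneg (hR0 s j) (hR0 s k)
  have hcsymm : ∀ j k, c j k = c k j := fun j k => by
    simp [hc, mul_comm]
  have hP : ∀ j k, (Xᴴ * X) j k = (c j k : ℂ) := by
    intro j k
    simp only [Matrix.mul_apply, conjTranspose_apply, hXR, hc, Complex.ofReal_sum,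
      Complex.ofReal_mul]
    refine Finset.sum_congr rfl fun s _ => ?_
    rw [Complex.star_def, Complex.conj_ofReal]
  have hd : ∀ j, (∑ s, ∑ t, X s j * X s t) = ∑ t, (c j t : ℂ) := by
    intro j
    rw [Finset.sum_comm]
    refine Finset.sum_congr rfl fun t _ => ?_
    simp only [hXR, hc, Complex.ofReal_sum, Complex.ofReal_mul]
  rw [Matrix.posSemidef_iff_dotProduct_mulVec]
  constructor
  · unfold Matrix.IsHermitian
    ext j k
    simp only [conjTranspose_apply, Matrix.sub_apply, diagonal_apply, star_sub]
    rcases eq_or_ne j k with h | h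
    · subst h
      simp [hd, hP, ← Complex.ofReal_sum]
    · simp [h, Ne.symm h, hP, hcsymm j k]
  · intro x
    set A : Fin n → Fin n → ℂ := fun j k =>
      (c j k : ℂ) * (star (x j) * x j - star (x j) * x k) with hA
    have e1 : star x ⬝ᵥ ((Matrix.diagonal (fun j => ∑ s, ∑ t, X s j * X s t) - Xᴴ * X) *ᵥ x)
        = ∑ j, ∑ k, A j k := by
      simp only [dotProduct, mulVec, Matrix.sub_apply, Pi.star_apply, diagonal_apply, hP, hd]
      refine Finset.sum_congr rfl fun j _ => ?_
      have hterm : ∀ i, star (x j) * (((if j = i then ∑ t, (c j t : ℂ) else 0) - (c j i : ℂ)) * x i)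
          = (if j = i then (∑ t, (c j t : ℂ)) * (star (x j) * x j) else 0)
            - (c j i : ℂ) * (star (x j) * x i) := by
        intro i
        by_cases h : j = i
        · subst h; simp only [if_true]; ring
        · simp only [h, if_false]; ring
      rw [Finset.mul_sum]
      simp only [hterm, hA, mul_sub, Finset.sum_sub_distrib, Finset.sum_ite_eq,
        Finset.mem_univ, if_true, Finset.sum_mul]
    have e2 : (∑ j, ∑ k, A j k) + (∑ j, ∑ k, A j k)
        = ∑ j, ∑ k, (c j k : ℂ) * ((x j - x k) * star (x j - x k)) := by
      conv_lhs => rw [show (∑ j, ∑ k, A j k) + (∑ j, ∑ k, A j k)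
        = (∑ j, ∑ k, A j k) + (∑ j, ∑ k, A k j) from by rw [Finset.sum_comm (f := fun j k => A k j)]]
      rw [← Finset.sum_add_distrib]
      refine Finset.sum_congr rfl fun j _ => ?_
      rw [← Finset.sum_add_distrib]
      refine Finset.sum_congr rfl fun k _ => ?_
      simp only [hA, ← hcsymm j k, star_sub]
      ring
    have key : star x ⬝ᵥ ((Matrix.diagonal (fun j => ∑ s, ∑ t, X s j * X s t) - Xᴴ * X) *ᵥ x)
        = (1/2 : ℂ) * ∑ j, ∑ k, (c j k : ℂ) * ((x j - x k) * star (x j - x k)) := by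
      rw [e1, ← e2]; ring
    rw [key]
    refine mul_nonneg ?_ ?_
    · rw [show (1/2 : ℂ) = ((1/2 : ℝ) : ℂ) by norm_num, Complex.zero_le_real]
      norm_num
    refine Finset.sum_nonneg fun j _ => Finset.sum_nonneg fun k _ => ?_
    have : (x j - x k) * star (x j - x k) = (Complex.normSq (x j - x k) : ℂ) := by
      rw [Complex.star_def, Complex.mul_conj]
    rw [this, ← Complex.ofReal_mul, Complex.zero_le_real]
    exact mul_nonneg (hc0 j k) (Complex.normSq_nonneg _)
end

section
/- Let X be a complex m × n matrix (not all entries zero) and define λ_j = ∑_s ∑_t |X_{s,j}| |X_{s,t}|. Then X*X ≤ Δ(λ) in the Loewner order, where Δ(λ) is the diagonal matrix with entries λ_j. -/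
open Matrix
open scoped ComplexOrder

lemma star_mul_self_eq_norm_sq (z : ℂ) : star z * z = ((‖z‖ ^ 2 : ℝ) : ℂ) := by
  have := Complex.mul_conj z
  rw [Complex.star_def, mul_comm, this, Complex.normSq_eq_norm_sq]

lemma key_sq {n : ℕ} (a b : Fin n → ℝ) (ha : ∀ t, 0 ≤ a t) (hb : ∀ t, 0 ≤ b t) :
    (∑ t, a t * b t) ^ 2 ≤ ∑ j, ∑ t, (a j * a t) * b j ^ 2 := by
  rw [sq, Finset.sum_mul_sum]
  have hsym : ∑ j, ∑ t, (a j * a t) * b t ^ 2 = ∑ j, ∑ t, (a j * a t) * b j ^ 2 := by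
    rw [Finset.sum_comm]
    exact Finset.sum_congr rfl fun j _ => Finset.sum_congr rfl fun t _ => by ring
  have h2 : 2 * ∑ j, ∑ t, (a j * b j) * (a t * b t)
      ≤ ∑ j, ∑ t, (a j * a t) * (b j ^ 2 + b t ^ 2) := by
    rw [Finset.mul_sum]
    refine Finset.sum_le_sum fun j _ => ?_
    rw [Finset.mul_sum]
    refine Finset.sum_le_sum fun t _ => ?_
    nlinarith [sq_nonneg (b j - b t), mul_nonneg (ha j) (ha t)]
  have h3 : ∑ j, ∑ t, (a j * a t) * (b j ^ 2 + b t ^ 2)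
      = (∑ j, ∑ t, (a j * a t) * b j ^ 2) + ∑ j, ∑ t, (a j * a t) * b t ^ 2 := by
    rw [← Finset.sum_add_distrib]
    refine Finset.sum_congr rfl fun j _ => ?_
    rw [← Finset.sum_add_distrib]
    exact Finset.sum_congr rfl fun t _ => by ring
  linarith [h2, h3, hsym]

theorem stmt3 {m n : ℕ} (X : Matrix (Fin m) (Fin n) ℂ) (hX : X ≠ 0) :
    (Matrix.diagonal (fun j => ((∑ s, ∑ t, ‖X s j‖ * ‖X s t‖ : ℝ) : ℂ)) - Xᴴ * X).PosSemidef := by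
  rw [Matrix.posSemidef_iff_dotProduct_mulVec]
  constructor
  · exact (Matrix.isHermitian_diagonal_of_self_adjoint _
      (funext fun j => Complex.conj_ofReal _)).sub (Matrix.posSemidef_conjTranspose_mul_self X).1
  · intro x
    have hquad : star x ⬝ᵥ ((Matrix.diagonal
          (fun j => ((∑ s, ∑ t, ‖X s j‖ * ‖X s t‖ : ℝ) : ℂ)) - Xᴴ * X) *ᵥ x)
        = (((∑ j, (∑ s, ∑ t, ‖X s j‖ * ‖X s t‖) * ‖x j‖ ^ 2)
            - ∑ s, ‖(X *ᵥ x) s‖ ^ 2 : ℝ) : ℂ) := by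
      rw [Matrix.sub_mulVec, dotProduct_sub]
      have h1 : star x ⬝ᵥ (Matrix.diagonal
            (fun j => ((∑ s, ∑ t, ‖X s j‖ * ‖X s t‖ : ℝ) : ℂ)) *ᵥ x)
          = ((∑ j, (∑ s, ∑ t, ‖X s j‖ * ‖X s t‖) * ‖x j‖ ^ 2 : ℝ) : ℂ) := by
        simp only [dotProduct, Matrix.mulVec_diagonal, Pi.star_apply]
        rw [Complex.ofReal_sum]
        refine Finset.sum_congr rfl fun j _ => ?_
        calc star (x j) * (((∑ s, ∑ t, ‖X s j‖ * ‖X s t‖ : ℝ) : ℂ) * x j)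
            = ((∑ s, ∑ t, ‖X s j‖ * ‖X s t‖ : ℝ) : ℂ) * (star (x j) * x j) := by ring
          _ = _ := by
              rw [star_mul_self_eq_norm_sq, Complex.ofReal_mul]
      have h2 : star x ⬝ᵥ ((Xᴴ * X) *ᵥ x) = ((∑ s, ‖(X *ᵥ x) s‖ ^ 2 : ℝ) : ℂ) := by
        rw [← Matrix.mulVec_mulVec, Matrix.dotProduct_mulVec, ← Matrix.star_mulVec]
        simp only [dotProduct, Pi.star_apply]
        rw [Complex.ofReal_sum]
        exact Finset.sum_congr rfl fun s _ => star_mul_self_eq_norm_sq _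
      rw [h1, h2, ← Complex.ofReal_sub]
    rw [hquad, Complex.zero_le_real, sub_nonneg]
    have step1 : ∀ s, ‖(X *ᵥ x) s‖ ^ 2 ≤ ∑ j, ∑ t, (‖X s j‖ * ‖X s t‖) * ‖x j‖ ^ 2 := by
      intro s
      have hb : ‖(X *ᵥ x) s‖ ≤ ∑ t, ‖X s t‖ * ‖x t‖ := by
        rw [Matrix.mulVec, dotProduct]
        exact (norm_sum_le _ _).trans (le_of_eq (Finset.sum_congr rfl fun t _ => norm_mul _ _))
      calc ‖(X *ᵥ x) s‖ ^ 2 ≤ (∑ t, ‖X s t‖ * ‖x t‖) ^ 2 :=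
            pow_le_pow_left₀ (norm_nonneg _) hb 2
        _ ≤ ∑ j, ∑ t, (‖X s j‖ * ‖X s t‖) * ‖x j‖ ^ 2 :=
            key_sq _ _ (fun t => norm_nonneg _) (fun t => norm_nonneg _)
    calc ∑ s, ‖(X *ᵥ x) s‖ ^ 2 ≤ ∑ s, ∑ j, ∑ t, (‖X s j‖ * ‖X s t‖) * ‖x j‖ ^ 2 :=
          Finset.sum_le_sum fun s _ => step1 s
      _ = ∑ j, (∑ s, ∑ t, ‖X s j‖ * ‖X s t‖) * ‖x j‖ ^ 2 := by
          rw [Finset.sum_comm]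
          refine Finset.sum_congr rfl fun j _ => ?_
          rw [Finset.sum_mul]
          exact Finset.sum_congr rfl fun s _ => by rw [Finset.sum_mul]
end

section
/- Let Q be a positive semidefinite n × n complex matrix with all diagonal entries at most 1. Then the Schur multiplier norm of Q is at most 1, i.e., for every n × n complex matrix A, ‖Q ∘ A‖_op ≤ ‖A‖_op, where ∘ denotes the entrywise product. -/
open Matrix
open scoped ComplexOrder

noncomputable def l2norm {ι : Type*} [Fintype ι] (v : ι → ℂ) : ℝ :=
  Real.sqrt (∑ i, ‖v i‖ ^ 2)

noncomputable def opNorm {ι κ : Type*} [Fintype ι] [Fintype κ] (X : Matrix ι κ ℂ) : ℝ :=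
  sSup {r : ℝ | ∃ z : κ → ℂ, l2norm z ≤ 1 ∧ r = l2norm (X.mulVec z)}

lemma l2norm_eq {n : ℕ} (v : Fin n → ℂ) :
    l2norm v = ‖(WithLp.equiv 2 (Fin n → ℂ)).symm v‖ := by
  rw [EuclideanSpace.norm_eq]; rfl

lemma opNorm_eq_clm {n : ℕ} (X : Matrix (Fin n) (Fin n) ℂ) :
    opNorm X = ‖toEuclideanCLM (n := Fin n) (𝕜 := ℂ) X‖ := by
  set L := toEuclideanCLM (n := Fin n) (𝕜 := ℂ) X with hL
  have hmem : ∀ r ∈ {r : ℝ | ∃ z : Fin n → ℂ, l2norm z ≤ 1 ∧ r = l2norm (X.mulVec z)},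
      r ≤ ‖L‖ := by
    rintro r ⟨z, hz, rfl⟩
    have h1 : l2norm (X.mulVec z) = ‖L ((WithLp.equiv 2 (Fin n → ℂ)).symm z)‖ := by
      rw [l2norm_eq, hL, WithLp.equiv_symm_apply, toEuclideanCLM_toLp]
    rw [h1]
    calc ‖L ((WithLp.equiv 2 (Fin n → ℂ)).symm z)‖
        ≤ ‖L‖ * ‖(WithLp.equiv 2 (Fin n → ℂ)).symm z‖ := L.le_opNorm _
      _ ≤ ‖L‖ * 1 := by
          apply mul_le_mul_of_nonneg_left _ (norm_nonneg _)
          rw [← l2norm_eq]; exact hz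
      _ = ‖L‖ := mul_one _
  apply le_antisymm
  · exact Real.sSup_le hmem (norm_nonneg _)
  · apply ContinuousLinearMap.opNorm_le_bound
    · apply Real.sSup_nonneg
      rintro r ⟨z, hz, rfl⟩
      exact Real.sqrt_nonneg _
    · intro w
      rcases eq_or_ne w 0 with rfl | hw
      · simp
      · have hwn : 0 < ‖w‖ := norm_pos_iff.mpr hw
        set z : Fin n → ℂ := WithLp.equiv 2 (Fin n → ℂ) ((‖w‖ : ℂ)⁻¹ • w) with hzdef
        have hz1 : l2norm z ≤ 1 := by
          rw [l2norm_eq]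
          simp only [hzdef, Equiv.symm_apply_apply]
          rw [norm_smul]
          simp [hwn.ne', norm_inv]
        have hmem2 : ‖L ((WithLp.equiv 2 (Fin n → ℂ)).symm z)‖ ∈
            {r : ℝ | ∃ z : Fin n → ℂ, l2norm z ≤ 1 ∧ r = l2norm (X.mulVec z)} := by
          refine ⟨z, hz1, ?_⟩
          rw [l2norm_eq, hL, WithLp.equiv_symm_apply, toEuclideanCLM_toLp]
        have hbdd : BddAbove {r : ℝ | ∃ z : Fin n → ℂ, l2norm z ≤ 1 ∧ r = l2norm (X.mulVec z)} :=
          ⟨‖L‖, hmem⟩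
        have hle := le_csSup hbdd hmem2
        have heq : L ((WithLp.equiv 2 (Fin n → ℂ)).symm z) = (‖w‖ : ℂ)⁻¹ • L w := by
          rw [hzdef]
          simp only [Equiv.symm_apply_apply]
          exact L.map_smul _ _
        rw [heq, norm_smul] at hle
        have : ‖((‖w‖ : ℂ))⁻¹‖ = ‖w‖⁻¹ := by
          rw [norm_inv, Complex.norm_real, Real.norm_of_nonneg (norm_nonneg _)]
        rw [this] at hle
        calc ‖L w‖ = ‖w‖ * (‖w‖⁻¹ * ‖L w‖) := by field_simp
          _ ≤ ‖w‖ * sSup _ := by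
              apply mul_le_mul_of_nonneg_left hle (norm_nonneg _)
          _ = _ * ‖w‖ := mul_comm _ _

private lemma schur_key {n : ℕ} (Q : Matrix (Fin n) (Fin n) ℂ) (hQ : Q.PosSemidef)
    (hdiag : ∀ j, (Q j j).re ≤ 1) (A : Matrix (Fin n) (Fin n) ℂ)
    (x y : EuclideanSpace ℂ (Fin n)) :
    ‖∑ i, (starRingEnd ℂ) (y i) *
        ((Matrix.of fun i j => Q i j * A i j).mulVec (WithLp.equiv 2 (Fin n → ℂ) x) i)‖
      ≤ ‖toEuclideanCLM (n := Fin n) (𝕜 := ℂ) A‖ * (‖y‖ * ‖x‖) := by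
  obtain ⟨B, hB, hBB⟩ : ∃ B : Matrix (Fin n) (Fin n) ℂ, B.IsHermitian ∧ B * B = Q := by
    open scoped MatrixOrder in
    exact ⟨CFC.sqrt Q, (CFC.sqrt_nonneg Q).posSemidef.1, CFC.sqrt_mul_sqrt_self Q hQ.nonneg⟩
  have hQBB : ∀ i j, Q i j = ∑ k, (starRingEnd ℂ) (B k i) * B k j := by
    intro i j
    rw [← hBB, Matrix.mul_apply]
    refine Finset.sum_congr rfl fun k _ => ?_
    rw [← hB.apply i k]
    rfl
  set LA := toEuclideanCLM (n := Fin n) (𝕜 := ℂ) A with hLA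
  set xh : Fin n → EuclideanSpace ℂ (Fin n) :=
    fun k => (WithLp.equiv 2 (Fin n → ℂ)).symm (fun j => B k j * x j) with hxh
  set yh : Fin n → EuclideanSpace ℂ (Fin n) :=
    fun k => (WithLp.equiv 2 (Fin n → ℂ)).symm (fun j => B k j * y j) with hyh
  have expand : ∑ i, (starRingEnd ℂ) (y i) *
        ((Matrix.of fun i j => Q i j * A i j).mulVec (WithLp.equiv 2 (Fin n → ℂ) x) i)
      = ∑ k, (inner ℂ (yh k) (LA (xh k)) : ℂ) := by
    have rhs : ∀ k, (inner ℂ (yh k) (LA (xh k)) : ℂ)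
        = ∑ i, ∑ j, (starRingEnd ℂ) (B k i * y i) * (A i j * (B k j * x j)) := by
      intro k
      rw [hxh, hLA, WithLp.equiv_symm_apply, toEuclideanCLM_toLp]
      simp only [PiLp.inner_apply, RCLike.inner_apply', hyh, WithLp.equiv_symm_apply, PiLp.toLp_apply,
        Matrix.toLin'_apply, Matrix.mulVec, dotProduct, Finset.mul_sum]
    have lhs : ∑ i, (starRingEnd ℂ) (y i) *
          ((Matrix.of fun i j => Q i j * A i j).mulVec (WithLp.equiv 2 (Fin n → ℂ) x) i)
        = ∑ i, ∑ j, ∑ k, (starRingEnd ℂ) (B k i * y i) * (A i j * (B k j * x j)) := by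
      simp only [Matrix.mulVec, dotProduct, Matrix.of_apply, Finset.mul_sum,
        WithLp.equiv_apply]
      refine Finset.sum_congr rfl fun i _ => Finset.sum_congr rfl fun j _ => ?_
      rw [hQBB i j]
      simp only [Finset.sum_mul, Finset.mul_sum]
      refine Finset.sum_congr rfl fun k _ => ?_
      simp only [_root_.map_mul]
      ring
    rw [lhs]
    simp only [rhs]
    rw [show (∑ i : Fin n, ∑ j : Fin n, ∑ k : Fin n,
        (starRingEnd ℂ) (B k i * y i) * (A i j * (B k j * x j)))
      = ∑ i : Fin n, ∑ k : Fin n, ∑ j : Fin n,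
        (starRingEnd ℂ) (B k i * y i) * (A i j * (B k j * x j))
      from Finset.sum_congr rfl fun i _ => Finset.sum_comm]
    exact Finset.sum_comm
  have hdiagB : ∀ j, ∑ k, ‖B k j‖ ^ 2 = (Q j j).re := by
    intro j
    rw [hQBB j j, Complex.re_sum]
    refine Finset.sum_congr rfl fun k _ => ?_
    rw [mul_comm, Complex.mul_conj, Complex.ofReal_re, Complex.normSq_eq_norm_sq]
  have hv : ∀ v : EuclideanSpace ℂ (Fin n),
      Real.sqrt (∑ k, ‖(WithLp.equiv 2 (Fin n → ℂ)).symm (fun j => B k j * v j)‖ ^ 2) ≤ ‖v‖ := by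
    intro v
    have h1 : ∀ k : Fin n, ‖(WithLp.equiv 2 (Fin n → ℂ)).symm (fun j => B k j * v j)‖ ^ 2
        = ∑ j, ‖B k j‖ ^ 2 * ‖v j‖ ^ 2 := by
      intro k
      rw [EuclideanSpace.norm_eq, Real.sq_sqrt (Finset.sum_nonneg fun j _ => sq_nonneg _)]
      refine Finset.sum_congr rfl fun j _ => ?_
      simp [WithLp.equiv_symm_apply, PiLp.toLp_apply, norm_mul, mul_pow]
    have h2 : ∑ k, ∑ j, ‖B k j‖ ^ 2 * ‖v j‖ ^ 2 ≤ ∑ j : Fin n, ‖v j‖ ^ 2 := by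
      rw [Finset.sum_comm]
      refine Finset.sum_le_sum fun j _ => ?_
      rw [← Finset.sum_mul, hdiagB j]
      exact mul_le_of_le_one_left (sq_nonneg _) (hdiag j)
    simp only [h1]
    rw [EuclideanSpace.norm_eq]
    exact Real.sqrt_le_sqrt h2
  rw [expand]
  calc ‖∑ k, (inner ℂ (yh k) (LA (xh k)) : ℂ)‖
      ≤ ∑ k, ‖(inner ℂ (yh k) (LA (xh k)) : ℂ)‖ := norm_sum_le _ _
    _ ≤ ∑ k, ‖yh k‖ * (‖LA‖ * ‖xh k‖) := by
        refine Finset.sum_le_sum fun k _ => ?_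
        calc ‖(inner ℂ (yh k) (LA (xh k)) : ℂ)‖ ≤ ‖yh k‖ * ‖LA (xh k)‖ :=
              norm_inner_le_norm _ _
          _ ≤ ‖yh k‖ * (‖LA‖ * ‖xh k‖) :=
              mul_le_mul_of_nonneg_left (LA.le_opNorm _) (norm_nonneg _)
    _ = ‖LA‖ * ∑ k, ‖yh k‖ * ‖xh k‖ := by
        rw [Finset.mul_sum]
        exact Finset.sum_congr rfl fun k _ => by ring
    _ ≤ ‖LA‖ * (Real.sqrt (∑ k, ‖yh k‖ ^ 2) * Real.sqrt (∑ k, ‖xh k‖ ^ 2)) :=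
        mul_le_mul_of_nonneg_left (Real.sum_mul_le_sqrt_mul_sqrt _ _ _) (norm_nonneg _)
    _ ≤ ‖LA‖ * (‖y‖ * ‖x‖) := by
        apply mul_le_mul_of_nonneg_left _ (norm_nonneg _)
        have hx : Real.sqrt (∑ k, ‖xh k‖ ^ 2) ≤ ‖x‖ := by
          simp only [hxh]; exact hv x
        have hy : Real.sqrt (∑ k, ‖yh k‖ ^ 2) ≤ ‖y‖ := by
          simp only [hyh]; exact hv y
        exact mul_le_mul hy hx (Real.sqrt_nonneg _) (norm_nonneg _)


theorem stmt11 {n : ℕ} (Q : Matrix (Fin n) (Fin n) ℂ) (hQ : Q.PosSemidef)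
    (hdiag : ∀ j, (Q j j).re ≤ 1) (A : Matrix (Fin n) (Fin n) ℂ) :
    opNorm (Matrix.of fun i j => Q i j * A i j) ≤ opNorm A := by
  rw [opNorm_eq_clm, opNorm_eq_clm]
  set M := Matrix.of fun i j => Q i j * A i j with hM
  set LA := toEuclideanCLM (n := Fin n) (𝕜 := ℂ) A with hLA
  set LM := toEuclideanCLM (n := Fin n) (𝕜 := ℂ) M with hLM
  apply ContinuousLinearMap.opNorm_le_bound _ (norm_nonneg _)
  intro x
  set y : EuclideanSpace ℂ (Fin n) := LM x with hy
  have hinner : (inner ℂ y (LM x) : ℂ)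
      = ∑ i, (starRingEnd ℂ) (y i) * (M.mulVec (WithLp.equiv 2 (Fin n → ℂ) x) i) := by
    simp only [PiLp.inner_apply, RCLike.inner_apply']
    refine Finset.sum_congr rfl fun i _ => ?_
    rfl
  have hkey := schur_key Q hQ hdiag A x y
  rw [← hM, ← hLA, ← hinner, ← hy] at hkey
  have hself : ‖(inner ℂ y y : ℂ)‖ = ‖y‖ ^ 2 := by
    simp [inner_self_eq_norm_sq_to_K]
  rw [hself] at hkey
  rcases eq_or_lt_of_le (norm_nonneg y) with h0 | h0
  · rw [← h0]
    positivity
  · nlinarith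
end

section
/- Let 1 < k < 2 be a real constant and suppose that for every n and every Q ∈ Q_n there exist R ∈ R_n and P positive semidefinite with Q = k·R − P (so that Q_n ⊆ k·R_n − PSD_n). Then for every Q ∈ Q_n there exist R₊, R₋ ∈ R_n with Q = (1/(2−k))·R₊ − ((k−1)/(2−k))·R₋. -/
open Matrix Filter Finset
open scoped ComplexOrder Topology

def Qset (n : ℕ) : Set (Matrix (Fin n) (Fin n) ℂ) :=
  {X | X.PosSemidef ∧ ∀ j, X j j = 1}

noncomputable def Rset (n : ℕ) : Set (Matrix (Fin n) (Fin n) ℂ) :=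
  closure (convexHull ℝ {X | ∃ u : Fin n → ℂ, (∀ j, ‖u j‖ = 1) ∧
    X = Matrix.of fun i j => (starRingEnd ℂ) (u i) * u j})

attribute [local instance] Matrix.normedAddCommGroup Matrix.normedSpace

lemma Rset_subset {n : ℕ} {s : Set (Matrix (Fin n) (Fin n) ℂ)}
    (hconv : Convex ℝ s) (hclosed : IsClosed s)
    (hbase : ∀ u : Fin n → ℂ, (∀ j, ‖u j‖ = 1) →
      (Matrix.of fun i j => (starRingEnd ℂ) (u i) * u j) ∈ s) :
    Rset n ⊆ s := by
  refine closure_minimal (convexHull_min ?_ hconv) hclosed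
  rintro X ⟨u, hu, rfl⟩
  exact hbase u hu

lemma Rset_diag {n : ℕ} {R : Matrix (Fin n) (Fin n) ℂ} (hR : R ∈ Rset n) (j : Fin n) :
    R j j = 1 := by
  set s : Set (Matrix (Fin n) (Fin n) ℂ) := {X | X j j = 1} with hs
  have : Rset n ⊆ s := by
    refine Rset_subset ?_ ?_ ?_
    · intro X hX Y hY a b ha hb hab
      simp only [hs, Set.mem_setOf_eq, Matrix.add_apply, Matrix.smul_apply] at *
      rw [hX, hY, Complex.real_smul, Complex.real_smul, mul_one, mul_one,
        ← Complex.ofReal_add, hab, Complex.ofReal_one]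
    · have hcont : Continuous fun X : Matrix (Fin n) (Fin n) ℂ => X j j :=
        (continuous_apply j).comp (continuous_apply j)
      exact isClosed_eq hcont continuous_const
    · intro u hu
      simp only [hs, Set.mem_setOf_eq, Matrix.of_apply]
      rw [mul_comm, Complex.mul_conj]
      norm_cast
      rw [Complex.normSq_eq_norm_sq, hu j, one_pow]
  exact this hR

lemma Rset_norm {n : ℕ} {R : Matrix (Fin n) (Fin n) ℂ} (hR : R ∈ Rset n) : ‖R‖ ≤ 1 := by
  have : Rset n ⊆ Metric.closedBall (0 : Matrix (Fin n) (Fin n) ℂ) 1 := by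
    refine Rset_subset (convex_closedBall _ _) Metric.isClosed_closedBall ?_
    intro u hu
    rw [Metric.mem_closedBall, dist_zero_right]
    rw [Matrix.norm_le_iff zero_le_one]
    intro i j
    simp only [Matrix.of_apply, norm_mul, RCLike.norm_conj, hu i, hu j, one_mul, le_refl]
  have := this hR
  rwa [Metric.mem_closedBall, dist_zero_right] at this

lemma Qset_entry {n : ℕ} {X : Matrix (Fin n) (Fin n) ℂ} (hX : X ∈ Qset n) (i j : Fin n) :
    ‖X i j‖ ≤ 1 := by
  obtain ⟨hpsd, hdiag⟩ := hX
  by_cases hij : i = j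
  · subst hij; rw [hdiag]; norm_num
  by_cases hz : X i j = 0
  · simp [hz]
  set z := X i j with hzdef
  set t : ℝ := ‖z‖ with htdef
  have ht : 0 < t := norm_pos_iff.mpr hz
  set c : ℂ := -(z / t) with hcdef
  set x : Fin n → ℂ := c • (Pi.single i 1 : Fin n → ℂ) + (Pi.single j 1 : Fin n → ℂ) with hxdef
  have h0 := hpsd.dotProduct_mulVec_nonneg x
  have hji : X j i = star z := by
    conv_lhs => rw [← star_star (X j i)]
    rw [hpsd.1.apply i j]
  have hw : X *ᵥ x = c • (fun l => X l i * 1) + (fun l => X l j * 1) := by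
    rw [hxdef, mulVec_add, mulVec_smul, mulVec_single, mulVec_single]
    ext l; simp
  have hsingle : ∀ (m : Fin n), star ((Pi.single m 1 : Fin n → ℂ)) = Pi.single m 1 := by
    intro m; funext l
    simp [Pi.star_apply, Pi.single_apply, apply_ite]
  have hstarx : star x = (starRingEnd ℂ c) • (Pi.single i 1 : Fin n → ℂ)
      + (Pi.single j 1 : Fin n → ℂ) := by
    rw [hxdef, star_add, star_smul, hsingle, hsingle, starRingEnd_apply]
  have hform : star x ⬝ᵥ (X *ᵥ x)
      = (starRingEnd ℂ) c * (c * X i i + X i j) + (c * X j i + X j j) := by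
    rw [hw, hstarx]
    simp [add_dotProduct, smul_dotProduct, single_dotProduct, dotProduct_add, dotProduct_smul,
      mul_add, mul_one, Pi.add_apply, Pi.smul_apply, Pi.single_apply, hij, Ne.symm hij]
    ring
  have hzz : z * (starRingEnd ℂ) z = (t:ℝ)^2 := by
    rw [Complex.mul_conj]
    norm_cast
    rw [Complex.normSq_eq_norm_sq]
  have hc1 : (starRingEnd ℂ) c = -((starRingEnd ℂ) z / t) := by
    rw [hcdef, map_neg, map_div₀, Complex.conj_ofReal]
  have key : star x ⬝ᵥ (X *ᵥ x) = ((2 - 2*t : ℝ) : ℂ) := by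
    rw [hform, hdiag i, hdiag j, hji, ← starRingEnd_apply, hc1, hcdef]
    push_cast
    field_simp
    linear_combination (1 - 2*(t:ℂ)) * hzz
  rw [key] at h0
  have : (0:ℝ) ≤ 2 - 2*t := by rwa [Complex.zero_le_real] at h0
  linarith

lemma Qset_norm {n : ℕ} {X : Matrix (Fin n) (Fin n) ℂ} (hX : X ∈ Qset n) : ‖X‖ ≤ 1 := by
  rw [Matrix.norm_le_iff zero_le_one]
  exact fun i j => Qset_entry hX i j

lemma mem_Rset_tsum {n : ℕ} {w : ℕ → ℝ} {X : ℕ → Matrix (Fin n) (Fin n) ℂ}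
    {S : Matrix (Fin n) (Fin n) ℂ}
    (hw0 : ∀ i, 0 ≤ w i) (hw1 : HasSum w 1) (hX : ∀ i, X i ∈ Rset n)
    (hS : HasSum (fun i => w i • X i) S) : S ∈ Rset n := by
  have hconv : Convex ℝ (Rset n) := (convex_convexHull ℝ _).closure
  have hclosed : IsClosed (Rset n) := isClosed_closure
  set T : ℕ → Matrix (Fin n) (Fin n) ℂ :=
    fun N => (∑ i ∈ Finset.range N, w i • X i) + (1 - ∑ i ∈ Finset.range N, w i) • X 0 with hT
  have hmem : ∀ N, T N ∈ Rset n := by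
    intro N
    have h1 : ∑ i ∈ Finset.range N, w i ≤ 1 := sum_le_hasSum _ (fun i _ => hw0 i) hw1
    have key := hconv.sum_mem (t := Finset.range (N+1))
      (w := fun i => if i = N then 1 - ∑ i ∈ Finset.range N, w i else w i)
      (z := fun i => if i = N then X 0 else X i)
      (fun i _ => by
        by_cases h : i = N
        · rw [if_pos h]; linarith
        · rw [if_neg h]; exact hw0 i)
      (by
        rw [Finset.sum_range_succ, if_pos rfl]
        have : ∀ i ∈ Finset.range N,
            (if i = N then 1 - ∑ i ∈ Finset.range N, w i else w i) = w i := by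
          intro i hi
          rw [Finset.mem_range] at hi
          rw [if_neg (Nat.ne_of_lt hi)]
        rw [Finset.sum_congr rfl this]
        ring)
      (fun i _ => by
        by_cases h : i = N
        · rw [if_pos h]; exact hX 0
        · rw [if_neg h]; exact hX i)
    have heq : (∑ i ∈ Finset.range (N+1),
        (if i = N then 1 - ∑ i ∈ Finset.range N, w i else w i) •
          (if i = N then X 0 else X i)) = T N := by
      rw [Finset.sum_range_succ, if_pos rfl, if_pos rfl]
      congr 1
      refine Finset.sum_congr rfl fun i hi => ?_
      rw [Finset.mem_range] at hi
      rw [if_neg (Nat.ne_of_lt hi), if_neg (Nat.ne_of_lt hi)]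
    rwa [heq] at key
  have ht1 : Tendsto (fun N => ∑ i ∈ Finset.range N, w i) atTop (𝓝 1) := hw1.tendsto_sum_nat
  have h3 : Tendsto (fun N => (1 - ∑ i ∈ Finset.range N, w i) • X 0) atTop
      (𝓝 ((0:ℝ) • X 0)) := by
    have : Tendsto (fun N => 1 - ∑ i ∈ Finset.range N, w i) atTop (𝓝 (1 - 1)) :=
      tendsto_const_nhds.sub ht1
    rw [sub_self] at this
    exact this.smul_const (X 0)
  have ht2 : Tendsto T atTop (𝓝 S) := by
    have := (hS.tendsto_sum_nat).add h3
    rw [zero_smul, add_zero] at this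
    exact this
  exact hclosed.mem_of_tendsto ht2 (Filter.Eventually.of_forall hmem)

lemma smul_mem_Qset {n : ℕ} {c : ℝ} (hc : 0 ≤ c) {P : Matrix (Fin n) (Fin n) ℂ}
    (hP : P.PosSemidef) (hd : ∀ j, c • P j j = 1) : c • P ∈ Qset n := by
  refine ⟨posSemidef_iff_dotProduct_mulVec.mpr ⟨?_, ?_⟩, ?_⟩
  · show (c • P)ᴴ = c • P
    rw [Matrix.conjTranspose_smul, star_trivial, hP.1]
  · intro x
    rw [Matrix.smul_mulVec, dotProduct_smul]
    have h := hP.dotProduct_mulVec_nonneg x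
    have : c • (star x ⬝ᵥ P *ᵥ x) = (c : ℂ) * (star x ⬝ᵥ P *ᵥ x) := Complex.real_smul
    rw [this]
    exact mul_nonneg (by rwa [Complex.zero_le_real]) h
  · intro j
    rw [Matrix.smul_apply]
    exact hd j

theorem stmt14 (k : ℝ) (hk1 : 1 < k) (hk2 : k < 2)
    (hyp : ∀ (n : ℕ), ∀ Q ∈ Qset n, ∃ R ∈ Rset n, ∃ P : Matrix (Fin n) (Fin n) ℂ,
      P.PosSemidef ∧ Q = k • R - P) :
    ∀ (n : ℕ), ∀ Q ∈ Qset n, ∃ Rp ∈ Rset n, ∃ Rm ∈ Rset n,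
      Q = (1 / (2 - k)) • Rp - ((k - 1) / (2 - k)) • Rm := by
  intro n Q hQ
  have hk0 : (0:ℝ) < k := by linarith
  have hr0 : (0:ℝ) ≤ k - 1 := by linarith
  have hrpos : (0:ℝ) < k - 1 := by linarith
  have hr1 : k - 1 < 1 := by linarith
  have h2k : (2:ℝ) - k ≠ 0 := by intro h; linarith [h]
  have hkm1 : k - 1 ≠ 0 := ne_of_gt hrpos
  -- one step of the iteration
  have step : ∀ A : Matrix (Fin n) (Fin n) ℂ, A ∈ Qset n →
      ∃ R B, R ∈ Rset n ∧ B ∈ Qset n ∧ A = k • R - (k - 1) • B := by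
    intro A hA
    obtain ⟨R, hR, P, hPpsd, hAeq⟩ := hyp n A hA
    refine ⟨R, (k-1)⁻¹ • P, hR, ?_, ?_⟩
    · refine smul_mem_Qset (by positivity) hPpsd ?_
      intro j
      have hPj : P j j = (k:ℂ) - 1 := by
        have : P = k • R - A := by rw [hAeq]; abel
        rw [this, Matrix.sub_apply, Matrix.smul_apply, Rset_diag hR j, hA.2 j]
        rw [Complex.real_smul, mul_one]
      rw [hPj]
      rw [show ((k:ℂ) - 1) = ((k - 1 : ℝ) : ℂ) by push_cast; ring]
      rw [Complex.real_smul]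
      rw [← Complex.ofReal_mul]
      rw [inv_mul_cancel₀ hkm1]
      norm_num
    · rw [hAeq, smul_smul, mul_inv_cancel₀ hkm1, one_smul]
  -- build the sequences
  obtain ⟨Qs, Rs, hQs0, hQsmem, hRsmem, hrel⟩ :
      ∃ (Qs : ℕ → Matrix (Fin n) (Fin n) ℂ) (Rs : ℕ → Matrix (Fin n) (Fin n) ℂ),
        Qs 0 = Q ∧ (∀ m, Qs m ∈ Qset n) ∧ (∀ m, Rs m ∈ Rset n) ∧
        ∀ m, Qs m = k • Rs m - (k-1) • Qs (m+1) := by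
    choose f g hf hg hrec using step
    let F : {A : Matrix (Fin n) (Fin n) ℂ // A ∈ Qset n} →
        {A : Matrix (Fin n) (Fin n) ℂ // A ∈ Qset n} := fun A => ⟨g A.1 A.2, hg A.1 A.2⟩
    refine ⟨fun m => (F^[m] ⟨Q, hQ⟩).1, fun m => f (F^[m] ⟨Q, hQ⟩).1 (F^[m] ⟨Q, hQ⟩).2,
      rfl, fun m => (F^[m] ⟨Q, hQ⟩).2, fun m => hf _ _, fun m => ?_⟩
    have hsucc : F^[m+1] (⟨Q, hQ⟩ : {A // A ∈ Qset n}) = F (F^[m] ⟨Q, hQ⟩) :=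
      Function.iterate_succ_apply' F m _
    dsimp only
    rw [hsucc]
    exact hrec _ _
  -- telescoping identity
  set f : ℕ → Matrix (Fin n) (Fin n) ℂ := fun m => (k * (-(k-1))^m) • Rs m with hfdef
  have htel : ∀ N, Q = (∑ m ∈ Finset.range N, f m) + (-(k-1))^N • Qs N := by
    intro N
    induction N with
    | zero => simp [hQs0]
    | succ N ih =>
      rw [Finset.sum_range_succ]
      conv_lhs => rw [ih]
      rw [hrel N, hfdef]
      match_scalars <;> ring
  -- norm bounds and summability
  have hRsnorm : ∀ m, ‖Rs m‖ ≤ 1 := fun m => Rset_norm (hRsmem m)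
  have hQsnorm : ∀ m, ‖Qs m‖ ≤ 1 := fun m => Qset_norm (hQsmem m)
  have hfbound : ∀ m, ‖f m‖ ≤ k * (k-1)^m := by
    intro m
    rw [hfdef]
    calc ‖(k * (-(k-1))^m) • Rs m‖ = (k * (k-1)^m) * ‖Rs m‖ := by
          rw [norm_smul, Real.norm_eq_abs, abs_mul, abs_pow, abs_neg,
            abs_of_pos hk0, abs_of_nonneg hr0]
      _ ≤ (k * (k-1)^m) * 1 := by
          apply mul_le_mul_of_nonneg_left (hRsnorm m)
          positivity
      _ = k * (k-1)^m := mul_one _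
  have hsumf : Summable f :=
    Summable.of_norm_bounded ((summable_geometric_of_lt_one hr0 hr1).mul_left k) hfbound
  -- partial sums converge to Q
  have htail : Tendsto (fun N => (-(k-1))^N • Qs N) atTop (𝓝 0) := by
    apply squeeze_zero_norm (a := fun N => (k-1)^N)
    · intro N
      rw [norm_smul, Real.norm_eq_abs, abs_pow, abs_neg, abs_of_nonneg hr0]
      calc (k-1)^N * ‖Qs N‖ ≤ (k-1)^N * 1 := by
            apply mul_le_mul_of_nonneg_left (hQsnorm N)
            positivity
        _ = (k-1)^N := mul_one _
    · exact tendsto_pow_atTop_nhds_zero_of_lt_one hr0 hr1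
  have hQlim : Tendsto (fun N => ∑ m ∈ Finset.range N, f m) atTop (𝓝 Q) := by
    have heq : ∀ N, ∑ m ∈ Finset.range N, f m = Q - (-(k-1))^N • Qs N := by
      intro N
      have := htel N
      rw [this]; abel
    rw [funext heq]
    have := Filter.Tendsto.sub
      (tendsto_const_nhds : Tendsto (fun _ : ℕ => Q) atTop (𝓝 Q)) htail
    rw [sub_zero] at this
    exact this
  have hQsum : HasSum f Q := (hsumf.hasSum_iff_tendsto_nat).mpr hQlim
  -- even and odd parts
  have heS : Summable (fun i => f (2*i)) :=
    hsumf.comp_injective (fun a b h => by omega)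
  have hoS : Summable (fun i => f (2*i+1)) :=
    hsumf.comp_injective (fun a b h => by omega)
  set Sp : Matrix (Fin n) (Fin n) ℂ := ∑' i, f (2*i) with hSpdef
  set So : Matrix (Fin n) (Fin n) ℂ := ∑' i, f (2*i+1) with hSodef
  have hSp : HasSum (fun i => f (2*i)) Sp := heS.hasSum
  have hSo : HasSum (fun i => f (2*i+1)) So := hoS.hasSum
  have hQeq : Q = Sp + So := hQsum.unique (hSp.even_add_odd hSo)
  -- the weights
  set w : ℕ → ℝ := fun i => ((2-k)*k) * ((k-1)^2)^i with hwdef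
  have hw0 : ∀ i, 0 ≤ w i := by
    intro i
    have h1 : (0:ℝ) ≤ 2 - k := by linarith
    have : (0:ℝ) ≤ ((k-1)^2)^i := by positivity
    rw [hwdef]
    exact mul_nonneg (mul_nonneg h1 (le_of_lt hk0)) this
  have hsq0 : (0:ℝ) ≤ (k-1)^2 := sq_nonneg _
  have hsq1 : (k-1)^2 < 1 := by nlinarith
  have hw1 : HasSum w 1 := by
    have := (hasSum_geometric_of_lt_one hsq0 hsq1).mul_left ((2-k)*k)
    have heq : (2-k)*k * (1 - (k-1)^2)⁻¹ = 1 := by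
      rw [show (1 - (k-1)^2) = (2-k)*k by ring]
      apply mul_inv_cancel₀
      intro h
      have : (2-k)*k ≠ 0 := mul_ne_zero h2k (ne_of_gt hk0)
      exact this h
    rwa [heq] at this
  -- Rp
  have heven : ∀ i, (2-k) • f (2*i) = w i • Rs (2*i) := by
    intro i
    rw [hfdef, hwdef, smul_smul]
    congr 1
    rw [pow_mul, neg_sq]
    ring
  set Rp : Matrix (Fin n) (Fin n) ℂ := (2-k) • Sp with hRpdef
  have hRpsum : HasSum (fun i => w i • Rs (2*i)) Rp := by
    have := hSp.const_smul (2-k)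
    rwa [funext heven] at this
  have hRpmem : Rp ∈ Rset n := mem_Rset_tsum hw0 hw1 (fun i => hRsmem (2*i)) hRpsum
  -- Rm
  have hodd : ∀ i, (-((2-k)/(k-1))) • f (2*i+1) = w i • Rs (2*i+1) := by
    intro i
    rw [hfdef, hwdef, smul_smul]
    congr 1
    rw [pow_succ, pow_mul, neg_sq]
    field_simp
  set Rm : Matrix (Fin n) (Fin n) ℂ := (-((2-k)/(k-1))) • So with hRmdef
  have hRmsum : HasSum (fun i => w i • Rs (2*i+1)) Rm := by
    have := hSo.const_smul (-((2-k)/(k-1)))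
    rwa [funext hodd] at this
  have hRmmem : Rm ∈ Rset n := mem_Rset_tsum hw0 hw1 (fun i => hRsmem (2*i+1)) hRmsum
  -- conclusion
  refine ⟨Rp, hRpmem, Rm, hRmmem, ?_⟩
  have e1 : (1/(2-k)) * (2-k) = 1 := by field_simp
  have e2 : ((k-1)/(2-k)) * (-((2-k)/(k-1))) = -1 := by field_simp
  rw [hRpdef, hRmdef, smul_smul, smul_smul, e1, e2, one_smul, neg_one_smul, sub_neg_eq_add]
  exact hQeq
end

section
/- Let L be a k × m matrix and R a k × n matrix, each with all columns of Euclidean norm at most 1. Then the Schur multiplier norm of X = L*R is at most 1: for every m × n matrix A with operator norm ‖A‖_op ≤ 1, the entrywise product X ∘ A has operator norm at most 1. -/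
open Matrix
open scoped ComplexOrder

lemma l2norm_nonneg {ι : Type*} [Fintype ι] (v : ι → ℂ) : 0 ≤ l2norm v :=
  Real.sqrt_nonneg _

lemma sq_sum_le_of_l2norm_le {ι : Type*} [Fintype ι] {v : ι → ℂ} {b : ℝ}
    (h : l2norm v ≤ b) : ∑ i, ‖v i‖ ^ 2 ≤ b ^ 2 := by
  have h0 : (0:ℝ) ≤ ∑ i, ‖v i‖ ^ 2 :=
    Finset.sum_nonneg fun i _ => sq_nonneg _
  calc ∑ i, ‖v i‖ ^ 2 = (l2norm v) ^ 2 := (Real.sq_sqrt h0).symm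
    _ ≤ b ^ 2 := by
        apply pow_le_pow_left₀ (l2norm_nonneg v) h

lemma l2norm_smul {ι : Type*} [Fintype ι] (c : ℂ) (v : ι → ℂ) :
    l2norm (c • v) = ‖c‖ * l2norm v := by
  unfold l2norm
  have : ∀ i, ‖(c • v) i‖ ^ 2 = ‖c‖ ^ 2 * ‖v i‖ ^ 2 := by
    intro i
    simp [Pi.smul_apply, norm_smul, mul_pow]
  rw [Finset.sum_congr rfl fun i _ => this i, ← Finset.mul_sum,
    Real.sqrt_mul (sq_nonneg _), Real.sqrt_sq (norm_nonneg _)]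

lemma opNorm_bddAbove {ι κ : Type*} [Fintype ι] [Fintype κ] (A : Matrix ι κ ℂ) :
    BddAbove {r : ℝ | ∃ z : κ → ℂ, l2norm z ≤ 1 ∧ r = l2norm (A.mulVec z)} := by
  refine ⟨Real.sqrt (∑ i, (∑ j, ‖A i j‖) ^ 2), ?_⟩
  rintro r ⟨z, hz, rfl⟩
  have hzj : ∀ j, ‖z j‖ ≤ 1 := by
    intro j
    have h1 : ‖z j‖ ^ 2 ≤ 1 ^ 2 := by
      calc ‖z j‖ ^ 2 ≤ ∑ i, ‖z i‖ ^ 2 :=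
            Finset.single_le_sum (f := fun i => ‖z i‖ ^ 2)
              (fun i _ => sq_nonneg _) (Finset.mem_univ j)
        _ ≤ 1 ^ 2 := by simpa using sq_sum_le_of_l2norm_le hz
    nlinarith [norm_nonneg (z j)]
  apply Real.sqrt_le_sqrt
  apply Finset.sum_le_sum
  intro i _
  have h1 : ‖A.mulVec z i‖ ≤ ∑ j, ‖A i j‖ := by
    calc ‖A.mulVec z i‖ ≤ ∑ j, ‖A i j * z j‖ := norm_sum_le _ _
      _ ≤ ∑ j, ‖A i j‖ := by
          apply Finset.sum_le_sum
          intro j _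
          rw [norm_mul]
          calc ‖A i j‖ * ‖z j‖ ≤ ‖A i j‖ * 1 :=
                mul_le_mul_of_nonneg_left (hzj j) (norm_nonneg _)
            _ = ‖A i j‖ := mul_one _
  exact pow_le_pow_left₀ (norm_nonneg _) h1 2

lemma mulVec_contract {ι κ : Type*} [Fintype ι] [Fintype κ]
    {A : Matrix ι κ ℂ} (hA : opNorm A ≤ 1) (v : κ → ℂ) :
    l2norm (A.mulVec v) ≤ l2norm v := by
  by_cases hv : ∀ j, v j = 0
  · have : v = 0 := funext hv
    subst this
    simp [Matrix.mulVec_zero, l2norm]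
  · push_neg at hv
    obtain ⟨j0, hj0⟩ := hv
    have hpos : 0 < l2norm v := by
      apply Real.sqrt_pos.mpr
      apply Finset.sum_pos' (fun i _ => sq_nonneg _)
      refine ⟨j0, Finset.mem_univ _, ?_⟩
      have : 0 < ‖v j0‖ := norm_pos_iff.mpr hj0
      positivity
    set c : ℝ := l2norm v with hc
    have hne : (c : ℂ) ≠ 0 := by
      simp only [ne_eq, Complex.ofReal_eq_zero]
      exact ne_of_gt hpos
    set v' : κ → ℂ := ((c : ℂ))⁻¹ • v with hv'
    have hv'1 : l2norm v' = 1 := by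
      rw [hv', l2norm_smul, norm_inv, Complex.norm_real,
        Real.norm_of_nonneg (le_of_lt hpos)]
      field_simp
      exact hc.symm
    have hmem : l2norm (A.mulVec v') ∈
        {r : ℝ | ∃ z : κ → ℂ, l2norm z ≤ 1 ∧ r = l2norm (A.mulVec z)} :=
      ⟨v', le_of_eq hv'1, rfl⟩
    have hle1 : l2norm (A.mulVec v') ≤ 1 :=
      le_trans (le_csSup (opNorm_bddAbove A) hmem) hA
    have hvv : v = (c : ℂ) • v' := by
      rw [hv', smul_smul, mul_inv_cancel₀ hne, one_smul]
    calc l2norm (A.mulVec v) = l2norm (A.mulVec ((c : ℂ) • v')) := by rw [← hvv]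
      _ = ‖(c : ℂ)‖ * l2norm (A.mulVec v') := by
          rw [Matrix.mulVec_smul, l2norm_smul]
      _ ≤ ‖(c : ℂ)‖ * 1 := mul_le_mul_of_nonneg_left hle1 (norm_nonneg _)
      _ = c := by
          rw [mul_one, Complex.norm_real, Real.norm_of_nonneg (le_of_lt hpos)]

theorem stmt17 {k m n : ℕ} (L : Matrix (Fin k) (Fin m) ℂ) (R : Matrix (Fin k) (Fin n) ℂ)
    (hL : ∀ j, Real.sqrt (∑ s, ‖L s j‖ ^ 2) ≤ 1)
    (hR : ∀ j, Real.sqrt (∑ s, ‖R s j‖ ^ 2) ≤ 1)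
    (A : Matrix (Fin m) (Fin n) ℂ) (hA : opNorm A ≤ 1) :
    opNorm (Matrix.of fun i j => (Lᴴ * R) i j * A i j) ≤ 1 := by
  apply Real.sSup_le _ zero_le_one
  rintro r ⟨z, hz, rfl⟩
  set Y : Matrix (Fin m) (Fin n) ℂ := Matrix.of fun i j => (Lᴴ * R) i j * A i j with hY
  set v : Fin k → Fin n → ℂ := fun s j => R s j * z j with hv
  set w : Fin k → Fin m → ℂ := fun s => A.mulVec (v s) with hw
  -- pointwise identity
  have key : ∀ i, Y.mulVec z i = ∑ s, (starRingEnd ℂ) (L s i) * w s i := by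
    intro i
    simp only [hY, Matrix.mulVec, dotProduct, Matrix.of_apply, Matrix.mul_apply,
      Matrix.conjTranspose_apply, hw, hv, starRingEnd_apply]
    simp only [Finset.sum_mul, Finset.mul_sum]
    rw [Finset.sum_comm]
    apply Finset.sum_congr rfl
    intro j _
    apply Finset.sum_congr rfl
    intro s _
    ring
  -- bound the sum of squares
  have hsum : ∑ i, ‖Y.mulVec z i‖ ^ 2 ≤ 1 := by
    have step1 : ∀ i, ‖Y.mulVec z i‖ ^ 2 ≤ ∑ s, ‖w s i‖ ^ 2 := by
      intro i
      rw [key i]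
      have h1 : ‖∑ s, (starRingEnd ℂ) (L s i) * w s i‖ ≤ ∑ s, ‖L s i‖ * ‖w s i‖ := by
        calc ‖∑ s, (starRingEnd ℂ) (L s i) * w s i‖ ≤ ∑ s, ‖(starRingEnd ℂ) (L s i) * w s i‖ :=
              norm_sum_le _ _
          _ = ∑ s, ‖L s i‖ * ‖w s i‖ := by
              apply Finset.sum_congr rfl; intro s _
              rw [norm_mul, RCLike.norm_conj]
      have h2 : (∑ s, ‖L s i‖ * ‖w s i‖) ^ 2 ≤
          (∑ s, ‖L s i‖ ^ 2) * ∑ s, ‖w s i‖ ^ 2 :=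
        Finset.sum_mul_sq_le_sq_mul_sq _ _ _
      have hLi : ∑ s, ‖L s i‖ ^ 2 ≤ 1 := by
        simpa using sq_sum_le_of_l2norm_le (show l2norm (fun s => L s i) ≤ 1 from hL i)
      have hwn : (0:ℝ) ≤ ∑ s, ‖w s i‖ ^ 2 := Finset.sum_nonneg fun s _ => sq_nonneg _
      calc ‖∑ s, (starRingEnd ℂ) (L s i) * w s i‖ ^ 2
          ≤ (∑ s, ‖L s i‖ * ‖w s i‖) ^ 2 := by
            apply pow_le_pow_left₀ (norm_nonneg _) h1
        _ ≤ (∑ s, ‖L s i‖ ^ 2) * ∑ s, ‖w s i‖ ^ 2 := h2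
        _ ≤ 1 * ∑ s, ‖w s i‖ ^ 2 := mul_le_mul_of_nonneg_right hLi hwn
        _ = ∑ s, ‖w s i‖ ^ 2 := one_mul _
    have step2 : ∀ s, ∑ i, ‖w s i‖ ^ 2 ≤ ∑ j, ‖v s j‖ ^ 2 := by
      intro s
      have := mulVec_contract hA (v s)
      have h0 : (0:ℝ) ≤ ∑ j, ‖v s j‖ ^ 2 := Finset.sum_nonneg fun j _ => sq_nonneg _
      have := sq_sum_le_of_l2norm_le (b := l2norm (v s)) this
      rwa [l2norm, Real.sq_sqrt h0] at this
    have step3 : ∑ s, ∑ j, ‖v s j‖ ^ 2 ≤ 1 := by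
      rw [Finset.sum_comm]
      have : ∀ j : Fin n, ∑ s, ‖v s j‖ ^ 2 ≤ ‖z j‖ ^ 2 := by
        intro j
        have hRj : ∑ s, ‖R s j‖ ^ 2 ≤ 1 := by
          simpa using sq_sum_le_of_l2norm_le (show l2norm (fun s => R s j) ≤ 1 from hR j)
        calc ∑ s, ‖v s j‖ ^ 2 = (∑ s, ‖R s j‖ ^ 2) * ‖z j‖ ^ 2 := by
              rw [Finset.sum_mul]
              apply Finset.sum_congr rfl; intro s _
              simp [hv, norm_mul, mul_pow]
          _ ≤ 1 * ‖z j‖ ^ 2 := mul_le_mul_of_nonneg_right hRj (sq_nonneg _)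
          _ = ‖z j‖ ^ 2 := one_mul _
      calc ∑ j, ∑ s, ‖v s j‖ ^ 2 ≤ ∑ j, ‖z j‖ ^ 2 :=
            Finset.sum_le_sum fun j _ => this j
        _ ≤ 1 := by simpa using sq_sum_le_of_l2norm_le hz
    calc ∑ i, ‖Y.mulVec z i‖ ^ 2 ≤ ∑ i, ∑ s, ‖w s i‖ ^ 2 :=
          Finset.sum_le_sum fun i _ => step1 i
      _ = ∑ s, ∑ i, ‖w s i‖ ^ 2 := Finset.sum_comm
      _ ≤ ∑ s, ∑ j, ‖v s j‖ ^ 2 := Finset.sum_le_sum fun s _ => step2 s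
      _ ≤ 1 := step3
  calc l2norm (Y.mulVec z) = Real.sqrt (∑ i, ‖Y.mulVec z i‖ ^ 2) := rfl
    _ ≤ Real.sqrt 1 := Real.sqrt_le_sqrt hsum
    _ = 1 := Real.sqrt_one
end
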